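/- There is no existential first-order formula φ(x) over the vocabulary {Pos (unary), ⊆ (binary)} such that for every dimension n ≥ 1, every Boolean classifier M : {0,1}^n → {0,1}, and every partial instance e ∈ {0,1,⊥}^n, the structure A_M satisfies φ(e) if and only if e is a full instance. (A_M has domain {0,1,⊥}^n, interprets Pos as the set of full instances classified positively by M, and interprets ⊆ as subsumption.) -/

import Mathlib

open FirstOrder FirstOrder.Language

/-- The vocabulary of FOIL: one unary relation `Pos` and one binary relation `⊆`. -/
def FoilLang : FirstOrder.Language where
  Functions := fun _ => Empty
  Relations := fun n =>
    match n with
    | 1 => PUnit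
    | 2 => PUnit
    | _ => Empty

/-- Subsumption of partial instances. -/
def Subsumes {n : ℕ} (e₁ e₂ : Fin n → Option Bool) : Prop :=
  ∀ i, e₁ i ≠ none → e₁ i = e₂ i

/-- The structure A_M associated to a Boolean classifier M: the domain is the set of
partial instances, Pos holds of full instances classified positively, and the binary
relation is subsumption. -/
def foilStructure (n : ℕ) (M : (Fin n → Bool) → Bool) :
    FoilLang.Structure (Fin n → Option Bool) where
  funMap := fun {_} f _ => f.elim
  RelMap := fun {k} r v =>
    match k, r, v with
    | 0, r, _ => r.elim
    | 1, _, v => ∃ e' : Fin n → Bool, (∀ i, v 0 i = some (e' i)) ∧ M e' = true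
    | 2, _, v => Subsumes (v 0) (v 1)
    | (_ + 3), r, _ => r.elim

/-- Existential formulas: built from atomic formulas and negated atomic formulas
using ∧, ∨ and ∃ only. -/
inductive IsExist : ∀ {k : ℕ}, FoilLang.BoundedFormula (Fin 1) k → Prop
  | atomic {k} {φ : FoilLang.BoundedFormula (Fin 1) k} (h : φ.IsAtomic) : IsExist φ
  | negAtomic {k} {φ : FoilLang.BoundedFormula (Fin 1) k} (h : φ.IsAtomic) : IsExist φ.not
  | inf {k} {φ ψ : FoilLang.BoundedFormula (Fin 1) k} :
      IsExist φ → IsExist ψ → IsExist (φ ⊓ ψ)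
  | sup {k} {φ ψ : FoilLang.BoundedFormula (Fin 1) k} :
      IsExist φ → IsExist ψ → IsExist (φ ⊔ ψ)
  | ex {k} {φ : FoilLang.BoundedFormula (Fin 1) (k + 1)} : IsExist φ → IsExist φ.ex

-- Auxiliaries
noncomputable local instance S1 : FoilLang.Structure (Fin 1 → Option Bool) :=
  foilStructure 1 (fun _ => false)
noncomputable local instance S2 : FoilLang.Structure (Fin 2 → Option Bool) :=
  foilStructure 2 (fun _ => false)

def gmap (e : Fin 1 → Option Bool) : Fin 2 → Option Bool := Fin.snoc e none

lemma gmap_inj : Function.Injective gmap := by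
  intro a b h
  funext i
  have := congrFun h i.castSucc
  simpa [gmap, Fin.snoc_castSucc] using this

lemma subsumes_g (a b : Fin 1 → Option Bool) :
    Subsumes a b ↔ Subsumes (gmap a) (gmap b) := by
  constructor
  · intro h i hi
    induction i using Fin.lastCases with
    | last => simp only [gmap, Fin.snoc_last, ne_eq, not_true_eq_false] at hi
    | cast j =>
      simp only [gmap, Fin.snoc_castSucc] at hi ⊢
      exact h j hi
  · intro h i hi
    have := h i.castSucc (by simpa [gmap, Fin.snoc_castSucc] using hi)
    simpa [gmap, Fin.snoc_castSucc] using this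

lemma term_g {α : Type*} (t : FoilLang.Term α) (w : α → (Fin 1 → Option Bool)) :
    t.realize (gmap ∘ w) = gmap (t.realize w) := by
  induction t with
  | var => rfl
  | func f ts ih => exact f.elim

lemma atomic_transfer {k} {φ : FoilLang.BoundedFormula (Fin 1) k} (h : φ.IsAtomic)
    (v : Fin 1 → (Fin 1 → Option Bool)) (xs : Fin k → (Fin 1 → Option Bool)) :
    φ.Realize v xs ↔ φ.Realize (gmap ∘ v) (gmap ∘ xs) := by
  have hc : Sum.elim (gmap ∘ v) (gmap ∘ xs) = gmap ∘ Sum.elim v xs := by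
    funext x; cases x <;> rfl
  induction h with
  | equal t₁ t₂ =>
    simp only [BoundedFormula.realize_bdEqual, hc, term_g]
    exact ⟨fun h => h ▸ rfl, fun h => gmap_inj h⟩
  | rel R ts =>
    simp only [BoundedFormula.realize_rel, hc, term_g]
    rename_i l
    match l, R with
    | 1, r =>
      constructor <;> rintro ⟨e', -, hM⟩ <;> simp at hM
    | 2, r =>
      exact subsumes_g _ _

lemma exist_transfer {k} {φ : FoilLang.BoundedFormula (Fin 1) k} (h : IsExist φ) :
    ∀ (v : Fin 1 → (Fin 1 → Option Bool)) (xs : Fin k → (Fin 1 → Option Bool)),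
    φ.Realize v xs → φ.Realize (gmap ∘ v) (gmap ∘ xs) := by
  induction h with
  | atomic h => exact fun v xs => (atomic_transfer h v xs).mp
  | negAtomic h =>
    intro v xs hr
    simp only [BoundedFormula.realize_not] at *
    exact fun hc => hr ((atomic_transfer h v xs).mpr hc)
  | inf _ _ ih1 ih2 =>
    intro v xs hr
    rw [BoundedFormula.realize_inf] at *
    exact ⟨ih1 v xs hr.1, ih2 v xs hr.2⟩
  | sup _ _ ih1 ih2 =>
    intro v xs hr
    rw [BoundedFormula.realize_sup] at *
    exact hr.elim (fun h => Or.inl (ih1 v xs h)) (fun h => Or.inr (ih2 v xs h))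
  | ex _ ih =>
    intro v xs hr
    rw [BoundedFormula.realize_ex] at *
    obtain ⟨b, hb⟩ := hr
    exact ⟨gmap b, by rw [← Fin.comp_snoc]; exact ih v (Fin.snoc xs b) hb⟩

theorem no_existential_formula_defines_full :
    ¬ ∃ φ : FoilLang.Formula (Fin 1), IsExist φ ∧
      ∀ (n : ℕ), 1 ≤ n → ∀ (M : (Fin n → Bool) → Bool) (e : Fin n → Option Bool),
        (letI := foilStructure n M
         φ.Realize (fun _ => e) ↔ ∀ i, e i ≠ none) := by
  rintro ⟨φ, hex, hφ⟩
  set e : Fin 1 → Option Bool := fun _ => some true with he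
  have h1 : φ.Realize (M := Fin 1 → Option Bool) (fun _ => e) :=
    (hφ 1 le_rfl (fun _ => false) e).mpr (by simp [he])
  have h2 : BoundedFormula.Realize (M := Fin 2 → Option Bool) φ
      (gmap ∘ fun _ => e) (gmap ∘ (default : Fin 0 → (Fin 1 → Option Bool))) := by
    unfold Formula.Realize at h1
    have h := exist_transfer hex _ _ h1
    convert h using 2
  have h3 : φ.Realize (M := Fin 2 → Option Bool) (fun _ => gmap e) := by
    have : gmap ∘ (default : Fin 0 → (Fin 1 → Option Bool)) =
        (default : Fin 0 → (Fin 2 → Option Bool)) := Subsingleton.elim _ _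
    rw [this] at h2
    unfold Formula.Realize
    convert h2 using 2
    rfl
  have h4 := (hφ 2 (by norm_num) (fun _ => false) (gmap e)).mp h3
  exact h4 (Fin.last 1) (by simp only [gmap, Fin.snoc_last])
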